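/- Let w ∈ ℝ and let U : ℝ → Matrix (Fin 2) (Fin 2) ℂ be continuous such that x ↦ ‖U(x) + i·w·σ₃‖ is integrable on ℝ. Suppose v : ℝ → (Fin 2 → ℂ) is continuous and bounded and satisfies, for every x ∈ ℝ, the Volterra integral equation v(x) = e₁ + ∫_{-∞}^{x} exp(i·(1 - σ₃)·w·(x - τ)) · (U(τ) + i·w·σ₃) · v(τ) dτ, where e₁ = ![1, 0] and 1 denotes the 2×2 identity matrix. Then v is differentiable on ℝ with v'(x) = (U(x) + i·w·(identity)) · v(x) for all x, and v(x) → e₁ as x → -∞. -/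

import Mathlib

open Matrix MeasureTheory

attribute [local instance] Matrix.linftyOpNormedAddCommGroup Matrix.linftyOpNormedSpace
  Matrix.linftyOpNormedRing Matrix.linftyOpNormedAlgebra

noncomputable def σ₃ : Matrix (Fin 2) (Fin 2) ℂ := !![1, 0; 0, -1]

lemma expD (c : ℂ) : NormedSpace.exp (c • ((1 : Matrix (Fin 2) (Fin 2) ℂ) - σ₃)) =
    Matrix.diagonal ![1, Complex.exp (2*c)] := by
  have h1 : (1 : Matrix (Fin 2) (Fin 2) ℂ) - σ₃ = Matrix.diagonal ![0,2] := by
    ext i j; fin_cases i <;> fin_cases j <;> simp [σ₃, Matrix.one_apply] <;> norm_num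
  have h2 : c • (![0,2] : Fin 2 → ℂ) = ![0, 2*c] := by
    funext i; fin_cases i <;> simp <;> ring
  rw [h1, ← Matrix.diagonal_smul, h2, Matrix.exp_diagonal]
  ext i j
  fin_cases i <;> fin_cases j <;>
    simp [Pi.exp_def, ← Complex.exp_eq_exp_ℂ, Matrix.diagonal]

lemma hasDerivAt_integral_Iic {E : Type*} [NormedAddCommGroup E] [NormedSpace ℝ E]
    [CompleteSpace E] (g : ℝ → E) (hg : Continuous g) (hgi : Integrable g) (x : ℝ) :
    HasDerivAt (fun y => ∫ τ in Set.Iic y, g τ) (g x) x := by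
  have heq : (fun y => ∫ τ in Set.Iic y, g τ) =
      fun y => (∫ τ in Set.Iic (0:ℝ), g τ) + ∫ τ in (0:ℝ)..y, g τ := by
    funext y
    rw [← intervalIntegral.integral_Iic_sub_Iic hgi.integrableOn hgi.integrableOn]
    abel
  rw [heq]
  exact (intervalIntegral.integral_hasDerivAt_right (hgi.intervalIntegrable)
    hg.aestronglyMeasurable.stronglyMeasurableAtFilter hg.continuousAt).const_add _

lemma norm_exp_I_aux (z : ℂ) (hz : z.re = 0) : ‖Complex.exp z‖ = 1 := by
  rw [Complex.norm_exp, hz, Real.exp_zero]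

lemma tendsto_integral_Iic_atBot (h : ℝ → ℝ) (hi : Integrable h) :
    Filter.Tendsto (fun x => ∫ τ in Set.Iic x, h τ) Filter.atBot (nhds 0) := by
  have key := tendsto_setIntegral_of_antitone (f := h) (μ := volume)
    (s := fun y : ℝ => Set.Iic (-y)) (fun _ => measurableSet_Iic)
    (fun i j hij => Set.Iic_subset_Iic.2 (neg_le_neg hij)) ⟨0, hi.integrableOn⟩
  have hempty : ⋂ y : ℝ, Set.Iic (-y) = ∅ := by
    apply Set.eq_empty_iff_forall_notMem.2
    intro z hz
    have h1 := Set.mem_iInter.1 hz (-(z-1))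
    simp only [Set.mem_Iic, neg_neg] at h1
    linarith
  rw [hempty, setIntegral_empty] at key
  have h2 := key.comp Filter.tendsto_neg_atBot_atTop
  have h3 : ((fun i => ∫ (x : ℝ) in Set.Iic (-i), h x) ∘ Neg.neg) =
      fun x => ∫ τ in Set.Iic x, h τ := by
    funext x; simp [Function.comp]
  rwa [h3] at h2

/-- A bounded continuous solution of the Volterra integral equation
`v(x) = e₁ + ∫_{-∞}^{x} e^{i(1-σ₃)w(x-τ)}·(U(τ) + iwσ₃)·v(τ) dτ`
solves the differential equation `v' = (U + iw·1)·v` and tends to `e₁` as `x → -∞`. -/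
theorem volterra_jost_solution (w : ℝ) (U : ℝ → Matrix (Fin 2) (Fin 2) ℂ)
    (hUcont : Continuous U)
    (hUint : Integrable fun x => ‖U x + (Complex.I * (w : ℂ)) • σ₃‖)
    (v : ℝ → Fin 2 → ℂ) (hvcont : Continuous v)
    (hvbdd : ∃ C : ℝ, ∀ x : ℝ, ‖v x‖ ≤ C)
    (hv : ∀ x : ℝ, v x = ![1, 0] + ∫ τ in Set.Iic x,
      (NormedSpace.exp ((Complex.I * (w : ℂ) * ((x : ℂ) - (τ : ℂ))) •
        ((1 : Matrix (Fin 2) (Fin 2) ℂ) - σ₃))).mulVec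
        ((U τ + (Complex.I * (w : ℂ)) • σ₃).mulVec (v τ))) :
    (∀ x : ℝ, HasDerivAt v
      ((U x + (Complex.I * (w : ℂ)) • (1 : Matrix (Fin 2) (Fin 2) ℂ)).mulVec (v x)) x) ∧
    Filter.Tendsto v Filter.atBot (nhds ![1, 0]) := by
  obtain ⟨C, hC⟩ := hvbdd
  have hC0 : 0 ≤ C := (norm_nonneg _).trans (hC 0)
  have hBcont : Continuous (fun τ => U τ + (Complex.I * (w : ℂ)) • σ₃) :=
    hUcont.add continuous_const
  have hgC : Integrable (fun τ => ‖U τ + (Complex.I * (w : ℂ)) • σ₃‖ * C) := hUint.mul_const C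
  have hfcont : Continuous (fun τ => (U τ + (Complex.I * (w : ℂ)) • σ₃).mulVec (v τ)) :=
    hBcont.matrix_mulVec hvcont
  have hfb : ∀ τ, ‖(U τ + (Complex.I * (w : ℂ)) • σ₃).mulVec (v τ)‖ ≤
      ‖U τ + (Complex.I * (w : ℂ)) • σ₃‖ * C := fun τ =>
    (Matrix.linfty_opNorm_mulVec _ _).trans (mul_le_mul_of_nonneg_left (hC τ) (norm_nonneg _))
  -- the twisted integrand for fixed x
  have hIcont : ∀ x : ℝ, Continuous (fun τ : ℝ =>
      (Matrix.diagonal ![1, Complex.exp (2*(Complex.I * (w:ℂ) * ((x:ℂ) - (τ:ℂ))))]).mulVec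
        ((U τ + (Complex.I * (w : ℂ)) • σ₃).mulVec (v τ))) := by
    intro x
    apply Continuous.matrix_mulVec _ hfcont
    apply continuous_matrix
    intro i j
    fin_cases i <;> fin_cases j <;> simp [Matrix.diagonal_apply] <;> fun_prop
  have hdiagnorm : ∀ x τ : ℝ,
      ‖(Matrix.diagonal ![1, Complex.exp (2*(Complex.I * (w:ℂ) * ((x:ℂ) - (τ:ℂ))))] :
        Matrix (Fin 2) (Fin 2) ℂ)‖ ≤ 1 := by
    intro x τ
    rw [Matrix.linfty_opNorm_diagonal]
    rw [pi_norm_le_iff_of_nonneg zero_le_one]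
    intro i
    fin_cases i
    · simp
    · simp only [Fin.mk_one, Matrix.cons_val_one, Matrix.head_cons, Matrix.cons_val_zero]
      rw [norm_exp_I_aux]
      have : (2*(Complex.I * (w:ℂ) * ((x:ℂ) - (τ:ℂ)))) =
          Complex.I * ((2*w*(x - τ) : ℝ) : ℂ) := by push_cast; ring
      rw [this]
      simp
  have hIb : ∀ x τ : ℝ,
      ‖(Matrix.diagonal ![1, Complex.exp (2*(Complex.I * (w:ℂ) * ((x:ℂ) - (τ:ℂ))))]).mulVec
        ((U τ + (Complex.I * (w : ℂ)) • σ₃).mulVec (v τ))‖ ≤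
        ‖U τ + (Complex.I * (w : ℂ)) • σ₃‖ * C := by
    intro x τ
    refine (Matrix.linfty_opNorm_mulVec _ _).trans ?_
    calc _ ≤ 1 * (‖U τ + (Complex.I * (w : ℂ)) • σ₃‖ * C) := by
          exact mul_le_mul (hdiagnorm x τ) (hfb τ) (norm_nonneg _) zero_le_one
      _ = _ := one_mul _
  have hIint : ∀ x : ℝ, Integrable (fun τ : ℝ =>
      (Matrix.diagonal ![1, Complex.exp (2*(Complex.I * (w:ℂ) * ((x:ℂ) - (τ:ℂ))))]).mulVec
        ((U τ + (Complex.I * (w : ℂ)) • σ₃).mulVec (v τ))) := fun x =>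
    hgC.mono' (hIcont x).aestronglyMeasurable (Filter.Eventually.of_forall (hIb x))
  -- componentwise integral equation
  have hveq : ∀ (x : ℝ) (i : Fin 2), v x i = (![1,0] : Fin 2 → ℂ) i + ∫ τ in Set.Iic x,
      ((Matrix.diagonal ![1, Complex.exp (2*(Complex.I * (w:ℂ) * ((x:ℂ) - (τ:ℂ))))]).mulVec
        ((U τ + (Complex.I * (w : ℂ)) • σ₃).mulVec (v τ))) i := by
    intro x i
    have h := congrFun (hv x) i
    simp only [expD] at h
    rw [Pi.add_apply] at h
    rw [h]
    congr 1
    exact ((ContinuousLinearMap.proj (R := ℂ) (φ := fun _ : Fin 2 => ℂ) i).integral_comp_comm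
      (hIint x).integrableOn).symm
  have hveq0 : ∀ x : ℝ, v x 0 = 1 + ∫ τ in Set.Iic x,
      ((U τ + (Complex.I * (w : ℂ)) • σ₃).mulVec (v τ)) 0 := by
    intro x
    have h := hveq x 0
    simpa [Matrix.mulVec_diagonal] using h
  have hveq1 : ∀ x : ℝ, v x 1 = Complex.exp (2*Complex.I*(w:ℂ)*(x:ℂ)) *
      ∫ τ in Set.Iic x, Complex.exp (-(2*Complex.I*(w:ℂ)*(τ:ℂ))) *
        ((U τ + (Complex.I * (w : ℂ)) • σ₃).mulVec (v τ)) 1 := by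
    intro x
    have h := hveq x 1
    simp only [Matrix.mulVec_diagonal, Matrix.cons_val_one, Matrix.head_cons,
      Matrix.cons_val_zero] at h
    rw [h, zero_add, ← MeasureTheory.integral_const_mul]
    have hpt : ∀ τ : ℝ,
        Complex.exp (2*(Complex.I*(w:ℂ)*((x:ℂ)-(τ:ℂ)))) *
          ((U τ + (Complex.I * (w : ℂ)) • σ₃).mulVec (v τ)) 1 =
        Complex.exp (2*Complex.I*(w:ℂ)*(x:ℂ)) * (Complex.exp (-(2*Complex.I*(w:ℂ)*(τ:ℂ))) *
          ((U τ + (Complex.I * (w : ℂ)) • σ₃).mulVec (v τ)) 1) := by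
      intro τ
      have harg : (2*(Complex.I*(w:ℂ)*((x:ℂ)-(τ:ℂ)))) =
          2*Complex.I*(w:ℂ)*(x:ℂ) + -(2*Complex.I*(w:ℂ)*(τ:ℂ)) := by ring
      rw [harg, Complex.exp_add, mul_assoc]
    simp only [hpt]
  have hlimit : Filter.Tendsto v Filter.atBot (nhds ![1, 0]) := by
    have hb : ∀ x : ℝ, ‖v x - ![1,0]‖ ≤
        ∫ τ in Set.Iic x, ‖U τ + (Complex.I * (w : ℂ)) • σ₃‖ * C := by
      intro x
      have h := hv x
      simp only [expD] at h
      rw [h, add_sub_cancel_left]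
      refine (norm_integral_le_integral_norm _).trans ?_
      refine setIntegral_mono_on ((hIint x).norm.integrableOn) hgC.integrableOn
        measurableSet_Iic ?_
      intro τ _
      exact hIb x τ
    exact tendsto_sub_nhds_zero_iff.mp
      (squeeze_zero_norm hb (tendsto_integral_Iic_atBot _ hgC))
  -- scalar integrands
  have hf0cont : Continuous (fun τ : ℝ => ((U τ + (Complex.I * (w : ℂ)) • σ₃).mulVec (v τ)) 0) :=
    (continuous_apply _).comp hfcont
  have hf0i : Integrable (fun τ : ℝ => ((U τ + (Complex.I * (w : ℂ)) • σ₃).mulVec (v τ)) 0) := by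
    refine hgC.mono' hf0cont.aestronglyMeasurable (Filter.Eventually.of_forall fun τ => ?_)
    exact (norm_le_pi_norm _ 0).trans (hfb τ)
  have hkcont : Continuous (fun τ : ℝ => Complex.exp (-(2*Complex.I*(w:ℂ)*(τ:ℂ))) *
      ((U τ + (Complex.I * (w : ℂ)) • σ₃).mulVec (v τ)) 1) := by
    refine Continuous.mul ?_ ((continuous_apply _).comp hfcont)
    exact Complex.continuous_exp.comp (by fun_prop)
  have hknorm : ∀ τ : ℝ, ‖Complex.exp (-(2*Complex.I*(w:ℂ)*(τ:ℂ)))‖ = 1 := by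
    intro τ
    apply norm_exp_I_aux
    simp
  have hki : Integrable (fun τ : ℝ => Complex.exp (-(2*Complex.I*(w:ℂ)*(τ:ℂ))) *
      ((U τ + (Complex.I * (w : ℂ)) • σ₃).mulVec (v τ)) 1) := by
    refine hgC.mono' hkcont.aestronglyMeasurable (Filter.Eventually.of_forall fun τ => ?_)
    rw [norm_mul, hknorm τ, one_mul]
    exact (norm_le_pi_norm _ 1).trans (hfb τ)
  refine ⟨?_, hlimit⟩
  intro x
  rw [hasDerivAt_pi]
  intro i
  fin_cases i
  · -- component 0
    show HasDerivAt (fun y => v y (0 : Fin 2))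
      (((U x + (Complex.I * (w:ℂ)) • (1 : Matrix (Fin 2) (Fin 2) ℂ)).mulVec (v x)) (0:Fin 2)) x
    rw [show (fun y : ℝ => v y (0 : Fin 2)) = fun y : ℝ => 1 + ∫ τ in Set.Iic y,
        ((U τ + (Complex.I * (w : ℂ)) • σ₃).mulVec (v τ)) 0 from funext hveq0]
    have hd := (hasDerivAt_integral_Iic _ hf0cont hf0i x).const_add (1:ℂ)
    have hval : (((U x + (Complex.I * (w:ℂ)) • (1 : Matrix (Fin 2) (Fin 2) ℂ)).mulVec
        (v x)) (0:Fin 2)) = ((U x + (Complex.I * (w:ℂ)) • σ₃).mulVec (v x)) 0 := by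
      simp [Matrix.mulVec, dotProduct, Fin.sum_univ_two, σ₃, Matrix.one_apply]
    rw [hval]
    exact hd
  · -- component 1
    show HasDerivAt (fun y => v y (1 : Fin 2))
      (((U x + (Complex.I * (w:ℂ)) • (1 : Matrix (Fin 2) (Fin 2) ℂ)).mulVec (v x)) (1:Fin 2)) x
    rw [show (fun y : ℝ => v y (1 : Fin 2)) = fun y : ℝ => Complex.exp (2*Complex.I*(w:ℂ)*(y:ℂ)) *
        ∫ τ in Set.Iic y, Complex.exp (-(2*Complex.I*(w:ℂ)*(τ:ℂ))) *
          ((U τ + (Complex.I * (w : ℂ)) • σ₃).mulVec (v τ)) 1 from funext hveq1]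
    have h1 : HasDerivAt (fun y : ℝ => ((y:ℂ))) 1 x := by
      simpa using (hasDerivAt_id x).ofReal_comp
    have h3 := (h1.const_mul (2*Complex.I*(w:ℂ))).cexp
    have hG := hasDerivAt_integral_Iic _ hkcont hki x
    have h4 := h3.mul hG
    convert h4 using 1
    · rfl
    · rfl
    have hk1 : Complex.exp (2*Complex.I*(w:ℂ)*(x:ℂ)) *
        Complex.exp (-(2*Complex.I*(w:ℂ)*(x:ℂ))) = 1 := by
      rw [← Complex.exp_add, add_neg_cancel, Complex.exp_zero]
    have hterm : Complex.exp (2*Complex.I*(w:ℂ)*(x:ℂ)) *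
        (Complex.exp (-(2*Complex.I*(w:ℂ)*(x:ℂ))) *
          ((U x + (Complex.I*(w:ℂ))•σ₃).mulVec (v x)) 1) =
        ((U x + (Complex.I*(w:ℂ))•σ₃).mulVec (v x)) 1 := by
      rw [← mul_assoc, hk1, one_mul]
    have hlhs : ((U x + (Complex.I * (w:ℂ)) • (1:Matrix (Fin 2) (Fin 2) ℂ)).mulVec (v x)) 1 =
        2*Complex.I*(w:ℂ) * v x 1 + ((U x + (Complex.I*(w:ℂ))•σ₃).mulVec (v x)) 1 := by
      simp [Matrix.mulVec, dotProduct, Fin.sum_univ_two, σ₃, Matrix.one_apply]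
      ring
    show ((U x + (Complex.I * (w:ℂ)) • (1:Matrix (Fin 2) (Fin 2) ℂ)).mulVec (v x)) (1:Fin 2) = _
    rw [hlhs, hveq1 x, hterm]
    ring
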